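/- Let z ∈ ℍ parametrize a unit-area labelled triangle T_z with vertices (2/Im z)^{1/2}·z, 0, (2/Im z)^{1/2}. Then the angle of T_z at the b-vertex (at 0) equals the argument of z, and T_z is acute if and only if 0 < Re z < 1 and |z - 1/2| > 1/2. -/

import Mathlib

open Complex EuclideanGeometry

lemma aux_angle_lt_iff (x y : ℂ) (hx : x ≠ 0) (hy : y ≠ 0) :
    InnerProductGeometry.angle x y < Real.pi / 2 ↔ 0 < ((starRingEnd ℂ) x * y).re := by
  rw [InnerProductGeometry.angle, Real.arccos_lt_pi_div_two, Complex.inner, mul_comm]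
  have hp : 0 < ‖x‖ * ‖y‖ := mul_pos (norm_pos_iff.2 hx) (norm_pos_iff.2 hy)
  rw [div_pos_iff_of_pos_right hp]

lemma aux_vangle (p q r : ℂ) :
    EuclideanGeometry.angle p q r = InnerProductGeometry.angle (p - q) (r - q) := rfl

/-- For the unit-area labelled triangle `T_z` with vertices `(2/Im z)^{1/2}·z`, `0`,
`(2/Im z)^{1/2}`, the angle at the `b`-vertex (at `0`) equals `arg z`, and `T_z` is acute
iff `0 < Re z < 1` and `|z - 1/2| > 1/2`. -/
theorem angle_b_eq_arg_and_acute_iff (z : ℂ) (hz : 0 < z.im) :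
    EuclideanGeometry.angle ((Real.sqrt (2 / z.im) : ℂ) * z) 0 (Real.sqrt (2 / z.im) : ℂ)
      = Complex.arg z ∧
    ((EuclideanGeometry.angle (0 : ℂ) ((Real.sqrt (2 / z.im) : ℂ) * z)
          (Real.sqrt (2 / z.im) : ℂ) < Real.pi / 2 ∧
      EuclideanGeometry.angle ((Real.sqrt (2 / z.im) : ℂ) * z) 0
          (Real.sqrt (2 / z.im) : ℂ) < Real.pi / 2 ∧
      EuclideanGeometry.angle ((Real.sqrt (2 / z.im) : ℂ) * z)
          (Real.sqrt (2 / z.im) : ℂ) 0 < Real.pi / 2) ↔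
      (0 < z.re ∧ z.re < 1 ∧ 1 / 2 < ‖z - 1 / 2‖)) := by
  set s : ℝ := Real.sqrt (2 / z.im) with hsdef
  have hs : 0 < s := Real.sqrt_pos.2 (div_pos two_pos hz)
  have hzne : z ≠ 0 := fun h => by simp [h] at hz
  have hsz : (s : ℂ) * z ≠ 0 := mul_ne_zero (by exact_mod_cast hs.ne') hzne
  have hsne : (s : ℂ) ≠ 0 := by exact_mod_cast hs.ne'
  have hszs : (s : ℂ) * z - s ≠ 0 := by
    intro h
    have : ((s : ℂ) * z - s).im = 0 := by rw [h]; simp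
    simp [Complex.mul_im] at this
    rcases this with h1 | h1
    · exact hs.ne' h1
    · exact hz.ne' h1
  have hs2 : 0 < s * s := mul_pos hs hs
  constructor
  · -- angle at 0 equals arg z
    rw [aux_vangle, sub_zero, sub_zero, InnerProductGeometry.angle, Complex.inner]
    have habs : ‖z‖ ≠ 0 := norm_ne_zero_iff.2 hzne
    have : ((s : ℂ) * (starRingEnd ℂ) ((s : ℂ) * z)).re = s * s * z.re := by
      simp [Complex.mul_re, Complex.mul_im]; ring
    rw [this]
    have hn1 : ‖(s : ℂ) * z‖ = s * ‖z‖ := by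
      simp [abs_of_pos hs]
    have hn2 : ‖(s : ℂ)‖ = s := by simp [abs_of_pos hs]
    rw [hn1, hn2]
    have heq : s * s * z.re / (s * ‖z‖ * s) = z.re / ‖z‖ := by
      field_simp
    rw [heq, ← Complex.cos_arg hzne, Real.arccos_cos
      (Complex.arg_nonneg_iff.2 hz.le) (Complex.arg_le_pi z)]
  · -- acuteness
    rw [aux_vangle, aux_vangle, aux_vangle]
    rw [aux_angle_lt_iff _ _ (by rwa [zero_sub, neg_ne_zero]) (by
        intro h; exact hszs (sub_eq_zero.1 (by linear_combination -h))),
      aux_angle_lt_iff _ _ (by rwa [sub_zero]) (by rwa [sub_zero]),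
      aux_angle_lt_iff _ _ hszs (by rwa [zero_sub, neg_ne_zero])]
    have e1 : ((starRingEnd ℂ) (0 - (s : ℂ) * z) * ((s : ℂ) - (s : ℂ) * z)).re
        = s * s * (z.re * z.re + z.im * z.im - z.re) := by
      simp [Complex.mul_re, Complex.mul_im]; ring
    have e2 : ((starRingEnd ℂ) ((s : ℂ) * z - 0) * ((s : ℂ) - 0)).re
        = s * s * z.re := by
      simp [Complex.mul_re, Complex.mul_im]; ring
    have e3 : ((starRingEnd ℂ) ((s : ℂ) * z - s) * ((0 : ℂ) - s)).re
        = s * s * (1 - z.re) := by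
      simp [Complex.mul_re, Complex.mul_im]; ring
    rw [e1, e2, e3, mul_pos_iff_of_pos_left hs2, mul_pos_iff_of_pos_left hs2,
      mul_pos_iff_of_pos_left hs2]
    have habs : (1 / 2 : ℝ) < ‖z - 1 / 2‖ ↔
        z.re < z.re * z.re + z.im * z.im := by
      rw [show (1 / 2 : ℝ) < ‖z - 1 / 2‖ ↔
          (1 / 2 : ℝ) ^ 2 < ‖z - 1 / 2‖ ^ 2 from
        (pow_lt_pow_iff_left₀ (by norm_num) (norm_nonneg _) two_ne_zero).symm,
        Complex.sq_norm, Complex.normSq_apply]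
      simp
      constructor <;> intro h <;> nlinarith
    rw [habs]
    constructor <;> rintro ⟨h1, h2, h3⟩ <;> exact ⟨by linarith, by linarith, by linarith⟩
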